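/- Let I = [0,1] with Lebesgue measure, x_i^{(n)} = i/n, and let P(x,y) = (1−α)·y^{−α} for some α ∈ [0, 1/2). Then s_n := sup_i ∑_{k=1}^n ∫_{(k−1)/n}^{k/n} |P(x_i, k/n) − P(x_i, y)| dy = (1−α)·(∫_0^1 y^{−α} dy − n^{−(1−α)}·∑_{k=1}^n k^{−α}) = O(n^{−(1−α)}), and in particular s_n → 0 as n → ∞. -/

import Mathlib

open Asymptotics

section PowerLawAux

variable {α : ℝ}

lemma aux_integral_rpow (hα : α < 1) {a b : ℝ} (hab : a ≤ b) :
    ∫ y in Set.Ioc a b, y ^ (-α) = (b ^ (1 - α) - a ^ (1 - α)) / (1 - α) := by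
  rw [← intervalIntegral.integral_of_le hab,
    integral_rpow (Or.inl (by linarith : (-1 : ℝ) < -α))]
  ring_nf

lemma aux_integrable (hα : α < 1) {a b : ℝ} :
    MeasureTheory.IntegrableOn (fun y : ℝ => y ^ (-α)) (Set.Ioc a b) := by
  have h := intervalIntegral.intervalIntegrable_rpow' (a := a) (b := b)
    (r := -α) (by linarith)
  exact h.1

lemma aux_term (hα0 : 0 ≤ α) (hα : α < 1) {n k : ℕ} (hn : 1 ≤ n) (hk : 1 ≤ k) :
    ∫ y in Set.Ioc (((k : ℝ) - 1) / n) ((k : ℝ) / n),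
        |(1 - α) * ((k : ℝ) / n) ^ (-α) - (1 - α) * y ^ (-α)|
      = (((k : ℝ) / n) ^ (1 - α) - (((k : ℝ) - 1) / n) ^ (1 - α))
          - (1 - α) * ((k : ℝ) / n) ^ (-α) / n := by
  have hn0 : (0 : ℝ) < n := by exact_mod_cast hn
  have hk1 : (1 : ℝ) ≤ (k : ℝ) := by exact_mod_cast hk
  set a := ((k : ℝ) - 1) / n with ha_def
  set b := (k : ℝ) / n with hb_def
  have ha : (0 : ℝ) ≤ a := by
    apply div_nonneg (by linarith) hn0.le
  have hab : a ≤ b := by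
    exact (div_le_div_iff_of_pos_right hn0).mpr (by linarith)
  have hb0 : (0:ℝ) < b := by positivity
  have key : ∀ y ∈ Set.Ioc a b,
      |(1 - α) * b ^ (-α) - (1 - α) * y ^ (-α)|
        = (1 - α) * y ^ (-α) - (1 - α) * b ^ (-α) := by
    intro y hy
    have hy0 : 0 < y := lt_of_le_of_lt ha hy.1
    have hmono : b ^ (-α) ≤ y ^ (-α) :=
      Real.rpow_le_rpow_of_nonpos hy0 hy.2 (by linarith)
    have : (1 - α) * b ^ (-α) ≤ (1 - α) * y ^ (-α) :=
      mul_le_mul_of_nonneg_left hmono (by linarith)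
    rw [abs_of_nonpos (by linarith)]
    ring
  rw [MeasureTheory.setIntegral_congr_fun measurableSet_Ioc key]
  have hint : MeasureTheory.IntegrableOn (fun y : ℝ => (1 - α) * y ^ (-α))
      (Set.Ioc a b) := (aux_integrable hα).const_mul _
  have hint2 : MeasureTheory.IntegrableOn (fun _ : ℝ => (1 - α) * b ^ (-α))
      (Set.Ioc a b) := MeasureTheory.integrableOn_const measure_Ioc_lt_top.ne
  rw [MeasureTheory.integral_sub hint hint2, MeasureTheory.integral_const_mul,
    aux_integral_rpow hα hab, MeasureTheory.setIntegral_const, Real.volume_real_Ioc,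
    max_eq_left (by linarith), smul_eq_mul]
  have hba : b - a = 1 / n := by
    rw [ha_def, hb_def]; field_simp; ring
  rw [hba]
  have h1 : (1:ℝ) - α ≠ 0 := by linarith
  field_simp

lemma aux_tele (f : ℕ → ℝ) (n : ℕ) :
    ∑ k ∈ Finset.Icc 1 n, (f k - f (k - 1)) = f n - f 0 := by
  induction n with
  | zero => simp
  | succ m ih =>
    rw [Finset.sum_Icc_succ_top (Nat.succ_le_succ (Nat.zero_le m)), ih]
    simp only [Nat.add_sub_cancel]
    ring

lemma aux_sum (hα0 : 0 ≤ α) (hα : α < 1) {n : ℕ} (hn : 1 ≤ n) :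
    ∑ k ∈ Finset.Icc 1 n, ∫ y in Set.Ioc (((k : ℝ) - 1) / n) ((k : ℝ) / n),
        |(1 - α) * ((k : ℝ) / n) ^ (-α) - (1 - α) * y ^ (-α)|
      = 1 - (1 - α) * (n : ℝ) ^ (-(1 - α)) * ∑ k ∈ Finset.Icc 1 n, (k : ℝ) ^ (-α) := by
  have hn0 : (0 : ℝ) < n := by exact_mod_cast hn
  have h1 : (1:ℝ) - α ≠ 0 := by linarith
  set f : ℕ → ℝ := fun j => ((j : ℝ) / n) ^ (1 - α) with hf
  have hstep : ∀ k ∈ Finset.Icc 1 n,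
      (∫ y in Set.Ioc (((k : ℝ) - 1) / n) ((k : ℝ) / n),
          |(1 - α) * ((k : ℝ) / n) ^ (-α) - (1 - α) * y ^ (-α)|)
        = (f k - f (k - 1)) - (1 - α) * (n : ℝ) ^ (-(1 - α)) * (k : ℝ) ^ (-α) := by
    intro k hk
    have hk1 := (Finset.mem_Icc.mp hk).1
    have hk0 : (0:ℝ) < k := by exact_mod_cast hk1
    rw [aux_term hα0 hα hn hk1]
    have hcast : ((k - 1 : ℕ) : ℝ) = (k : ℝ) - 1 := by
      push_cast [Nat.cast_sub hk1]; ring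
    have hdiv : ((k : ℝ) / n) ^ (-α) = (k : ℝ) ^ (-α) / (n : ℝ) ^ (-α) :=
      Real.div_rpow (by positivity) hn0.le (-α)
    have hmulpow : (n : ℝ) ^ (-α) * (n : ℝ) = (n : ℝ) ^ (1 - α) := by
      have h := Real.rpow_add hn0 (-α) 1
      rw [Real.rpow_one] at h
      rw [← h]; ring_nf
    have hnez : (n : ℝ) ^ (1 - α) ≠ 0 := by positivity
    simp only [hf]
    rw [hcast]
    have hc : (1 - α) * ((k : ℝ) / n) ^ (-α) / n
        = (1 - α) * (n : ℝ) ^ (-(1 - α)) * (k : ℝ) ^ (-α) := by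
      rw [hdiv, Real.rpow_neg hn0.le (1 - α), ← hmulpow]
      field_simp
    rw [hc]
  rw [Finset.sum_congr rfl hstep, Finset.sum_sub_distrib, aux_tele f n]
  have hfn : f n = 1 := by
    rw [hf]; simp [div_self hn0.ne']
  have hf0 : f 0 = 0 := by
    rw [hf]; simp [Real.zero_rpow h1]
  rw [hfn, hf0, ← Finset.mul_sum]
  ring

lemma aux_compare (hα0 : 0 ≤ α) (hα : α < 1) {k : ℕ} (hk : 1 ≤ k) :
    ((k : ℝ) + 1) ^ (1 - α) - (k : ℝ) ^ (1 - α) ≤ (1 - α) * (k : ℝ) ^ (-α) := by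
  have hk0 : (0:ℝ) < k := by exact_mod_cast hk
  have hI : ∫ y in (k : ℝ)..((k : ℝ) + 1), y ^ (-α)
      = (((k : ℝ) + 1) ^ (1 - α) - (k : ℝ) ^ (1 - α)) / (1 - α) := by
    rw [integral_rpow (Or.inl (by linarith : (-1 : ℝ) < -α))]
    ring_nf
  have hC : ∫ _ in (k : ℝ)..((k : ℝ) + 1), (k : ℝ) ^ (-α) = (k : ℝ) ^ (-α) := by
    simp
  have hmono : (∫ y in (k : ℝ)..((k : ℝ) + 1), y ^ (-α))
      ≤ ∫ _ in (k : ℝ)..((k : ℝ) + 1), (k : ℝ) ^ (-α) := by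
    apply intervalIntegral.integral_mono_on (by linarith)
    · exact intervalIntegral.intervalIntegrable_rpow' (by linarith)
    · exact intervalIntegrable_const
    · intro y hy
      exact Real.rpow_le_rpow_of_nonpos hk0 hy.1 (by linarith)
  rw [hI, hC] at hmono
  rw [div_le_iff₀ (by linarith)] at hmono
  linarith

lemma aux_lower (hα0 : 0 ≤ α) (hα : α < 1) (n : ℕ) :
    (n : ℝ) ^ (1 - α) - 1 ≤ (1 - α) * ∑ k ∈ Finset.Icc 1 n, (k : ℝ) ^ (-α) := by
  set g : ℕ → ℝ := fun j => ((j : ℝ) + 1) ^ (1 - α) with hg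
  have htele : ∑ k ∈ Finset.Icc 1 n, (g k - g (k - 1)) = g n - g 0 := aux_tele g n
  have hbound : ∑ k ∈ Finset.Icc 1 n, (g k - g (k - 1))
      ≤ ∑ k ∈ Finset.Icc 1 n, (1 - α) * (k : ℝ) ^ (-α) := by
    apply Finset.sum_le_sum
    intro k hk
    have hk1 := (Finset.mem_Icc.mp hk).1
    have hcast : ((k - 1 : ℕ) : ℝ) = (k : ℝ) - 1 := by
      push_cast [Nat.cast_sub hk1]; ring
    rw [hg]
    simp only [hcast]
    have := aux_compare hα0 hα hk1
    convert this using 2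
    · rfl
    ring
  rw [htele] at hbound
  have hg0 : g 0 = 1 := by rw [hg]; simp
  have hgn : (n : ℝ) ^ (1 - α) ≤ g n := by
    rw [hg]
    exact Real.rpow_le_rpow (by positivity) (by linarith) (by linarith)
  rw [← Finset.mul_sum] at hbound
  rw [hg0] at hbound
  linarith

lemma aux_upper (hα0 : 0 ≤ α) (hα : α < 1) {n : ℕ} (hn : 1 ≤ n) :
    ∑ k ∈ Finset.Icc 1 n, ∫ y in Set.Ioc (((k : ℝ) - 1) / n) ((k : ℝ) / n),
        |(1 - α) * ((k : ℝ) / n) ^ (-α) - (1 - α) * y ^ (-α)|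
      ≤ (n : ℝ) ^ (-(1 - α)) := by
  have hn0 : (0 : ℝ) < n := by exact_mod_cast hn
  rw [aux_sum hα0 hα hn]
  have hX : (0:ℝ) < (n : ℝ) ^ (-(1 - α)) := Real.rpow_pos_of_pos hn0 _
  have hlow := aux_lower hα0 hα n
  have hmul : (n : ℝ) ^ (-(1 - α)) * ((n : ℝ) ^ (1 - α) - 1)
      ≤ (n : ℝ) ^ (-(1 - α)) * ((1 - α) * ∑ k ∈ Finset.Icc 1 n, (k : ℝ) ^ (-α)) :=
    mul_le_mul_of_nonneg_left hlow hX.le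
  have hone : (n : ℝ) ^ (-(1 - α)) * (n : ℝ) ^ (1 - α) = 1 := by
    rw [← Real.rpow_add hn0]; simp
  nlinarith [hmul, hone]

lemma aux_nonneg (n : ℕ) :
    0 ≤ ∑ k ∈ Finset.Icc 1 n, ∫ y in Set.Ioc (((k : ℝ) - 1) / n) ((k : ℝ) / n),
        |(1 - α) * ((k : ℝ) / n) ^ (-α) - (1 - α) * y ^ (-α)| := by
  apply Finset.sum_nonneg
  intro k _
  exact MeasureTheory.setIntegral_nonneg measurableSet_Ioc fun y _ => abs_nonneg _

end PowerLawAux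

/-- For P(x,y) = (1−α)y^{−α} with α ∈ [0,1/2) and regular positions x_k = k/n on [0,1]:
s_n = sup_i ∑_k ∫_{(k−1)/n}^{k/n} |P(x_i,k/n) − P(x_i,y)| dy
    = (1−α)(∫_0^1 y^{−α}dy − n^{−(1−α)}∑_{k=1}^n k^{−α}) = O(n^{−(1−α)}) → 0. -/
theorem power_law_kernel_discretization (α : ℝ) (hα0 : 0 ≤ α) (hα : α < 1 / 2) :
    (∀ n : ℕ, 1 ≤ n → ∀ i ∈ Finset.Icc 1 n,
      ∑ k ∈ Finset.Icc 1 n, ∫ y in Set.Ioc (((k : ℝ) - 1) / n) ((k : ℝ) / n),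
          |(1 - α) * ((k : ℝ) / n) ^ (-α) - (1 - α) * y ^ (-α)|
        = (1 - α) * ((∫ y in Set.Ioc (0 : ℝ) 1, y ^ (-α)) -
            (n : ℝ) ^ (-(1 - α)) * ∑ k ∈ Finset.Icc 1 n, (k : ℝ) ^ (-α))) ∧
    (fun n : ℕ => ∑ k ∈ Finset.Icc 1 n, ∫ y in Set.Ioc (((k : ℝ) - 1) / n) ((k : ℝ) / n),
        |(1 - α) * ((k : ℝ) / n) ^ (-α) - (1 - α) * y ^ (-α)|)
      =O[Filter.atTop] (fun n : ℕ => (n : ℝ) ^ (-(1 - α))) ∧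
    Filter.Tendsto
      (fun n : ℕ => ∑ k ∈ Finset.Icc 1 n, ∫ y in Set.Ioc (((k : ℝ) - 1) / n) ((k : ℝ) / n),
        |(1 - α) * ((k : ℝ) / n) ^ (-α) - (1 - α) * y ^ (-α)|)
      Filter.atTop (nhds 0) := by
  have hα1 : α < 1 := by linarith
  have h1 : (1:ℝ) - α ≠ 0 := by linarith
  have hubAll : ∀ n : ℕ, (∑ k ∈ Finset.Icc 1 n,
      ∫ y in Set.Ioc (((k : ℝ) - 1) / n) ((k : ℝ) / n),
        |(1 - α) * ((k : ℝ) / n) ^ (-α) - (1 - α) * y ^ (-α)|)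
      ≤ (n : ℝ) ^ (-(1 - α)) := by
    intro n
    have hne : -(1 - α) ≠ 0 := by
      intro h'
      exact h1 (by linarith [neg_eq_zero.mp h'])
    rcases Nat.eq_zero_or_pos n with h | h
    · subst h
      rw [Finset.Icc_eq_empty (by norm_num), Finset.sum_empty, Nat.cast_zero,
        Real.zero_rpow hne]
    · exact aux_upper hα0 hα1 h
  refine ⟨?_, ?_, ?_⟩
  · intro n hn i _
    rw [aux_sum hα0 hα1 hn, aux_integral_rpow hα1 (by norm_num : (0:ℝ) ≤ 1),
      Real.one_rpow, Real.zero_rpow h1]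
    field_simp
    ring
  · apply Asymptotics.isBigO_of_le
    intro n
    rw [Real.norm_eq_abs, Real.norm_eq_abs, abs_of_nonneg (aux_nonneg n)]
    calc _ ≤ (n : ℝ) ^ (-(1 - α)) := hubAll n
      _ ≤ |(n : ℝ) ^ (-(1 - α))| := le_abs_self _
  · apply squeeze_zero (fun n => aux_nonneg n) hubAll
    exact (tendsto_rpow_neg_atTop (by linarith : (0:ℝ) < 1 - α)).comp
      tendsto_natCast_atTop_atTop
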